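/- Let V : ℝ^d → ℝ be continuous with ∫_{ℝ^d} exp(-V(x)) dx < ∞, and suppose the set of global minimizers of V is exactly {x_1^*, …, x_κ^*}, each with V(x_i^*) = min_x V(x). Fix δ' > 0 such that a(δ') := inf{V(x) : ‖x - x_i^*‖₂ ≥ δ' for all i = 1,…,κ} > min_x V(x). Then lim_{σ→0⁺} (2πσ)^{-d/2} · exp(min_x V(x)/σ) · ∫_{⋂_{i=1}^κ {‖x - x_i^*‖₂ ≥ δ'}} exp(-V(x)/σ) dx = 0. -/
import Mathlib


open MeasureTheory Real Filter Set

/-- Away from the global minimizers, the Laplace-normalized integral of `exp(-V/σ)` over the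
set of points at distance at least `δ'` from every minimizer tends to `0` as `σ → 0⁺`. -/
theorem stmt5 {d : ℕ} (V : EuclideanSpace ℝ (Fin d) → ℝ)
    (hV : Continuous V)
    (hint : Integrable (fun x => Real.exp (-V x)))
    (κ : ℕ) (xs : Fin κ → EuclideanSpace ℝ (Fin d))
    (Vmin : ℝ) (hlb : ∀ y, Vmin ≤ V y)
    (hset : {x | V x = Vmin} = Set.range xs)
    (δ' : ℝ) (hδ' : 0 < δ')
    (ha : ∃ c, Vmin < c ∧
      ∀ x : EuclideanSpace ℝ (Fin d), (∀ i, δ' ≤ dist x (xs i)) → c ≤ V x) :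
    Tendsto (fun σ : ℝ =>
        (2 * π * σ) ^ (-(d : ℝ) / 2) * Real.exp (Vmin / σ) *
          ∫ x in {x : EuclideanSpace ℝ (Fin d) | ∀ i, δ' ≤ dist x (xs i)},
            Real.exp (-V x / σ))
      (nhdsWithin 0 (Set.Ioi 0)) (nhds 0) := by
  obtain ⟨c, hc, hcS⟩ := ha
  set a : ℝ := c - Vmin with ha_def
  have ha_pos : 0 < a := sub_pos.mpr hc
  set S : Set (EuclideanSpace ℝ (Fin d)) := {x | ∀ i, δ' ≤ dist x (xs i)} with hS_def
  have hS_meas : MeasurableSet S := by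
    have : S = ⋂ i, {x | δ' ≤ dist x (xs i)} := by ext x; simp [hS_def]
    rw [this]
    exact MeasurableSet.iInter fun i =>
      (isClosed_le continuous_const (continuous_id.dist continuous_const)).measurableSet
  set I : ℝ := ∫ x, Real.exp (-V x) with hI_def
  have hI_nonneg : 0 ≤ I := integral_nonneg fun x => (Real.exp_pos _).le
  -- the dominating function
  set g : ℝ → ℝ := fun σ =>
    (2 * π) ^ (-(d : ℝ) / 2) * (Real.exp (a + Vmin) * I) *
      ((σ⁻¹) ^ ((d : ℝ) / 2) * Real.exp (-a * σ⁻¹)) with hg_def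
  have hg_tendsto : Tendsto g (nhdsWithin 0 (Set.Ioi 0)) (nhds 0) := by
    have h1 : Tendsto (fun t : ℝ => t ^ ((d : ℝ) / 2) * Real.exp (-a * t)) atTop (nhds 0) :=
      tendsto_rpow_mul_exp_neg_mul_atTop_nhds_zero _ _ ha_pos
    have h2 : Tendsto (fun σ : ℝ => (σ⁻¹) ^ ((d : ℝ) / 2) * Real.exp (-a * σ⁻¹))
        (nhdsWithin 0 (Set.Ioi 0)) (nhds 0) := h1.comp tendsto_inv_nhdsGT_zero
    have := h2.const_mul ((2 * π) ^ (-(d : ℝ) / 2) * (Real.exp (a + Vmin) * I))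
    simpa [hg_def] using this
  refine squeeze_zero' ?_ ?_ hg_tendsto
  · filter_upwards [self_mem_nhdsWithin] with σ hσ
    have hσ0 : 0 < σ := hσ
    positivity
  · filter_upwards [Ioo_mem_nhdsGT_of_mem (by norm_num : (0:ℝ) ∈ Ico (0:ℝ) 1)] with σ hσ
    obtain ⟨hσ0, hσ1⟩ := hσ
    have hσ1' : σ ≤ 1 := hσ1.le
    -- pointwise bound on S
    have hpt : ∀ x ∈ S, Real.exp (-V x / σ) ≤
        Real.exp (-Vmin / σ - a / σ + a + Vmin) * Real.exp (-V x) := by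
      intro x hx
      rw [← Real.exp_add]
      apply Real.exp_le_exp.mpr
      have hVx : c ≤ V x := hcS x hx
      have hinv : 1 ≤ σ⁻¹ := (one_le_inv₀ hσ0).mpr hσ1'
      have key : a * (σ⁻¹ - 1) ≤ (V x - Vmin) * (σ⁻¹ - 1) := by
        apply mul_le_mul_of_nonneg_right _ (by linarith)
        linarith
      have : -V x / σ = -Vmin * σ⁻¹ - (V x - Vmin) * σ⁻¹ := by
        field_simp; ring
      rw [this]
      have h1 : -Vmin / σ - a / σ + a + Vmin + -V x
          = -Vmin * σ⁻¹ - ((V x - Vmin) + a * (σ⁻¹ - 1)) := by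
        field_simp; ring
      rw [h1]
      have : (V x - Vmin) * σ⁻¹ = (V x - Vmin) + (V x - Vmin) * (σ⁻¹ - 1) := by ring
      rw [this]
      linarith
    -- integrability of the dominating function on S
    have hint2 : IntegrableOn
        (fun x => Real.exp (-Vmin / σ - a / σ + a + Vmin) * Real.exp (-V x)) S := by
      exact (hint.const_mul _).integrableOn
    -- integrability of exp(-V/σ) on S
    have hint1 : IntegrableOn (fun x => Real.exp (-V x / σ)) S := by
      apply Integrable.mono' hint2
      · exact ((hV.neg.div_const σ).rexp).aestronglyMeasurable
      · rw [ae_restrict_iff' hS_meas]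
        filter_upwards with x hx
        rw [Real.norm_of_nonneg (Real.exp_pos _).le]
        exact hpt x hx
    have hIS : ∫ x in S, Real.exp (-V x / σ)
        ≤ Real.exp (-Vmin / σ - a / σ + a + Vmin) * I := by
      calc ∫ x in S, Real.exp (-V x / σ)
          ≤ ∫ x in S, Real.exp (-Vmin / σ - a / σ + a + Vmin) * Real.exp (-V x) :=
            setIntegral_mono_on hint1 hint2 hS_meas hpt
        _ = Real.exp (-Vmin / σ - a / σ + a + Vmin) * ∫ x in S, Real.exp (-V x) := by
            rw [integral_const_mul]
        _ ≤ Real.exp (-Vmin / σ - a / σ + a + Vmin) * I := by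
            apply mul_le_mul_of_nonneg_left _ (Real.exp_pos _).le
            exact setIntegral_le_integral hint (Filter.Eventually.of_forall
              fun x => (Real.exp_pos _).le)
    have hpow : (2 * π * σ) ^ (-(d : ℝ) / 2)
        = (2 * π) ^ (-(d : ℝ) / 2) * (σ⁻¹) ^ ((d : ℝ) / 2) := by
      rw [Real.mul_rpow (by positivity) hσ0.le, neg_div, Real.rpow_neg hσ0.le,
        ← Real.inv_rpow hσ0.le]
    calc (2 * π * σ) ^ (-(d : ℝ) / 2) * Real.exp (Vmin / σ) * ∫ x in S, Real.exp (-V x / σ)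
        ≤ (2 * π * σ) ^ (-(d : ℝ) / 2) * Real.exp (Vmin / σ) *
            (Real.exp (-Vmin / σ - a / σ + a + Vmin) * I) := by
          apply mul_le_mul_of_nonneg_left hIS (by positivity)
      _ = g σ := by
          simp only [hg_def]
          have he : Real.exp (Vmin / σ) * Real.exp (-Vmin / σ - a / σ + a + Vmin)
              = Real.exp (a + Vmin) * Real.exp (-a * σ⁻¹) := by
            rw [← Real.exp_add, ← Real.exp_add]
            congr 1
            field_simp
            ring
          rw [hpow]
          calc (2 * π) ^ (-(d : ℝ) / 2) * σ⁻¹ ^ ((d : ℝ) / 2) * Real.exp (Vmin / σ) *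
                (Real.exp (-Vmin / σ - a / σ + a + Vmin) * I)
              = (2 * π) ^ (-(d : ℝ) / 2) * σ⁻¹ ^ ((d : ℝ) / 2) *
                ((Real.exp (Vmin / σ) * Real.exp (-Vmin / σ - a / σ + a + Vmin)) * I) := by ring
            _ = (2 * π) ^ (-(d : ℝ) / 2) * (Real.exp (a + Vmin) * I) *
                (σ⁻¹ ^ ((d : ℝ) / 2) * Real.exp (-a * σ⁻¹)) := by rw [he]; ring
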